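/- Let F_ε(·,·) be the localised functionals and, for a sequence ε_k ↓ 0, let F'(·,U) and F''(·,U) be the sequential Γ-liminf and Γ-limsup of F_{ε_k}(·,U) with respect to convergence in Ω ∩ εP, and let F'_-, F''_- be their inner regular envelopes in the set variable. Then for every sequence of positive numbers decreasing to zero there exists a subsequence (ε_k) such that F'_- = F''_- on L¹(Ω) × 𝒜(Ω). -/

import Mathlib

open MeasureTheory Filter Set
open scoped ENNReal NNReal Topology Pointwise

noncomputable section

attribute [local instance] Classical.propDecidable

/-- Euclidean `n`-space. -/
abbrev Euc (n : ℕ) : Type := EuclideanSpace ℝ (Fin n)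

/-- The open cube centred at the origin with side length `r`. -/
def cube (n : ℕ) (r : ℝ) : Set (Euc n) := {x | ∀ i, |x i| < r / 2}

/-- The periodic matrix `P = ℝⁿ \ ⋃_{k ∈ ℤⁿ} (k + Q_{1/2})`. -/
def Pset (n : ℕ) : Set (Euc n) :=
  {x | ∀ k : Fin n → ℤ, ∃ i, (1 : ℝ) / 4 ≤ |x i - (k i : ℝ)|}

/-- The `(n-1)`-dimensional Hausdorff measure on `ℝⁿ`. -/
def haus (n : ℕ) : Measure (Euc n) := μH[(n : ℝ) - 1]

/-- `Ω ⊆ ℝⁿ` has Lipschitz boundary: near every boundary point, after an isometry,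
`Ω` coincides with the region above the graph of a Lipschitz function. -/
def IsLipschitzDomain (n : ℕ) (Ω : Set (Euc n)) : Prop :=
  ∀ x ∈ frontier Ω, ∃ r : ℝ, 0 < r ∧ ∃ (O : Euc n ≃ₗᵢ[ℝ] Euc n) (i : Fin n)
    (φ : Euc n → ℝ) (L : ℝ≥0), LipschitzWith L φ ∧
      (∀ y z : Euc n, (∀ j, j ≠ i → y j = z j) → φ y = φ z) ∧
      (∀ y ∈ Metric.ball x r, (y ∈ Ω ↔ φ (O y) < O y i))

/-- Abstract data describing the `(G)SBV` framework: membership predicates for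
`GSBV²(U)`, `SBV²(U)` and `SBV^pc(U)`, the approximate gradient `∇u`, the jump set `S_u`,
the jump opening `[u] = u⁺ - u⁻` and the normal `ν_u` to the jump set. -/
structure FDData (n : ℕ) where
  memGSBV2 : Set (Euc n) → (Euc n → ℝ) → Prop
  memSBV2 : Set (Euc n) → (Euc n → ℝ) → Prop
  memPC : Set (Euc n) → (Euc n → ℝ) → Prop
  agrad : (Euc n → ℝ) → Euc n → Euc n
  jumpSet : (Euc n → ℝ) → Set (Euc n)
  jump : (Euc n → ℝ) → Euc n → ℝ
  normal : (Euc n → ℝ) → Euc n → Euc n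

variable {n : ℕ}

/-- The high-contrast Mumford–Shah energy
`F_ε(u) = ∫_Ω |∇u|² + H^{n-1}(S_u ∩ (Ω ∩ εP)) + β_ε H^{n-1}(S_u ∩ (Ω \ εP))`. -/
def Feps (D : FDData n) (Ω : Set (Euc n)) (β ε : ℝ) (u : Euc n → ℝ) : ℝ≥0∞ :=
  if D.memGSBV2 Ω u then
    (∫⁻ x in Ω, ENNReal.ofReal (‖D.agrad u x‖ ^ 2)) +
      haus n (D.jumpSet u ∩ (Ω ∩ ε • Pset n)) +
      ENNReal.ofReal β * haus n (D.jumpSet u ∩ (Ω \ ε • Pset n))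
  else ⊤

/-- The localised energy `F_ε(u, U)`. -/
def FepsLoc (D : FDData n) (β ε : ℝ) (u : Euc n → ℝ) (U : Set (Euc n)) : ℝ≥0∞ :=
  if D.memGSBV2 U u then
    (∫⁻ x in U, ENNReal.ofReal (‖D.agrad u x‖ ^ 2)) +
      haus n (D.jumpSet u ∩ (U ∩ ε • Pset n)) +
      ENNReal.ofReal β * haus n (D.jumpSet u ∩ (U \ ε • Pset n))
  else ⊤

/-- Convergence of `(u_k)` to `u` in `Ω ∩ εP`: there are `L¹(Ω)` functions `v_k`
with `v_k = u_k` on `Ω ∩ ε_k P` and `v_k → u` strongly in `L¹(Ω)`. -/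
def ConvPerf (Ω : Set (Euc n)) (εs : ℕ → ℝ) (us : ℕ → Euc n → ℝ) (u : Euc n → ℝ) : Prop :=
  (∀ k, IntegrableOn (us k) Ω volume) ∧ IntegrableOn u Ω volume ∧
    ∃ vs : ℕ → Euc n → ℝ, (∀ k, IntegrableOn (vs k) Ω volume) ∧
      (∀ k, ∀ x ∈ Ω ∩ εs k • Pset n, vs k x = us k x) ∧
      Tendsto (fun k => ∫⁻ x in Ω, ENNReal.ofReal |vs k x - u x|) atTop (𝓝 0)

/-- Sequential Γ-convergence with respect to convergence in `Ω ∩ εP`. -/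
def IsGammaLimit (Ω : Set (Euc n)) (εs : ℕ → ℝ) (F : ℕ → (Euc n → ℝ) → ℝ≥0∞)
    (G : (Euc n → ℝ) → ℝ≥0∞) : Prop :=
  ∀ u : Euc n → ℝ, IntegrableOn u Ω volume →
    (∀ us : ℕ → Euc n → ℝ, ConvPerf Ω εs us u →
      G u ≤ liminf (fun k => F k (us k)) atTop) ∧
    ∃ us : ℕ → Euc n → ℝ, ConvPerf Ω εs us u ∧
      limsup (fun k => F k (us k)) atTop ≤ G u

/-- The sequential Γ-lower limit `F'(u, U)` of the localised functionals. -/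
def GammaLB (Ω : Set (Euc n)) (εs : ℕ → ℝ)
    (F : ℕ → (Euc n → ℝ) → Set (Euc n) → ℝ≥0∞) (u : Euc n → ℝ) (U : Set (Euc n)) : ℝ≥0∞ :=
  ⨅ (us : ℕ → Euc n → ℝ) (_ : ConvPerf Ω εs us u), liminf (fun k => F k (us k) U) atTop

/-- The sequential Γ-upper limit `F''(u, U)` of the localised functionals. -/
def GammaUB (Ω : Set (Euc n)) (εs : ℕ → ℝ)
    (F : ℕ → (Euc n → ℝ) → Set (Euc n) → ℝ≥0∞) (u : Euc n → ℝ) (U : Set (Euc n)) : ℝ≥0∞ :=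
  ⨅ (us : ℕ → Euc n → ℝ) (_ : ConvPerf Ω εs us u), limsup (fun k => F k (us k) U) atTop

/-- Inner regular envelope `G₋(u, U) = sup {G(u, V) : V ⊂⊂ U}`. -/
def innerEnv (G : (Euc n → ℝ) → Set (Euc n) → ℝ≥0∞) (u : Euc n → ℝ)
    (U : Set (Euc n)) : ℝ≥0∞ :=
  ⨆ (V : Set (Euc n)) (_ : IsOpen V ∧ IsCompact (closure V) ∧ closure V ⊆ U), G u V

/-- The homogenised volume density `f̂(ξ) = inf {∫_{Q∩P} |ξ + Dw|² : w Q-periodic}`. -/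
def fhat (n : ℕ) (ξ : Euc n) : ℝ :=
  sInf {r : ℝ | ∃ w : Euc n → ℝ, ContDiff ℝ 1 w ∧
    (∀ (x : Euc n) (i : Fin n), w (x + EuclideanSpace.single i (1 : ℝ)) = w x) ∧
    r = ∫ x in cube n 1 ∩ Pset n, ‖ξ + gradient w x‖ ^ 2}

/-- `C` is a unit cube centred at the origin with one face orthogonal to `ν`. -/
def IsDirCube (n : ℕ) (ν : Euc n) (C : Set (Euc n)) : Prop :=
  ∃ O : Euc n ≃ₗᵢ[ℝ] Euc n, C = O '' cube n 1 ∧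
    ∃ i : Fin n, O (EuclideanSpace.single i (1 : ℝ)) = ν

/-- The elementary jump `u^ν_{0,z}(x) = z` if `x·ν ≥ 0`, `0` otherwise. -/
def u01 (n : ℕ) (ν : Euc n) (z : ℝ) (x : Euc n) : ℝ := if 0 ≤ (inner ℝ x ν : ℝ) then z else 0

/-- `w ∈ 𝒫(U)`: piecewise-constant `SBV` function with values in `{0,1}`. -/
def memPart01 (D : FDData n) (U : Set (Euc n)) (w : Euc n → ℝ) : Prop :=
  D.memPC U w ∧ ∀ x ∈ U, w x = 0 ∨ w x = 1

/-- `inf {H^{n-1}(S_w ∩ (Q^ν ∩ εP)) : w ∈ 𝒫(Q^ν ∩ εP), w = u^ν_{0,1} near ∂Q^ν}`. -/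
def ghApprox (D : FDData n) (ν : Euc n) (C : Set (Euc n)) (ε : ℝ) : ℝ :=
  sInf {r : ℝ | ∃ w : Euc n → ℝ, memPart01 D (C ∩ ε • Pset n) w ∧
    (∃ V : Set (Euc n), IsOpen V ∧ frontier C ⊆ V ∧ ∀ x ∈ V, w x = u01 n ν 1 x) ∧
    r = (haus n (D.jumpSet w ∩ (C ∩ ε • Pset n))).toReal}

/-- `gh` is the density `ĝ`: for every unit `ν` and unit cube `Q^ν` with a face
orthogonal to `ν`, `ĝ(ν) = lim_{ε → 0⁺}` of the minimal perimeter `ghApprox`. -/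
def IsGhat (D : FDData n) (gh : Euc n → ℝ) : Prop :=
  ∀ ν : Euc n, ‖ν‖ = 1 → ∀ C : Set (Euc n), IsDirCube n ν C →
    Tendsto (fun ε => ghApprox D ν C ε) (𝓝[>] (0 : ℝ)) (𝓝 (gh ν))

/-- Free-discontinuity functional with volume density `f` and surface density `g([u], ν_u)`. -/
def Fhom (D : FDData n) (Ω : Set (Euc n)) (f : Euc n → ℝ) (g : ℝ → Euc n → ℝ)
    (u : Euc n → ℝ) : ℝ≥0∞ :=
  if D.memGSBV2 Ω u then
    (∫⁻ x in Ω, ENNReal.ofReal (f (D.agrad u x))) +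
      ∫⁻ x in D.jumpSet u ∩ Ω, ENNReal.ofReal (g (D.jump u x) (D.normal u x)) ∂(haus n)
  else ⊤

/-- Free-discontinuity functional with volume density `f` and surface density `g(ν_u)`. -/
def FhomNu (D : FDData n) (Ω : Set (Euc n)) (f : Euc n → ℝ) (g : Euc n → ℝ)
    (u : Euc n → ℝ) : ℝ≥0∞ :=
  if D.memGSBV2 Ω u then
    (∫⁻ x in Ω, ENNReal.ofReal (f (D.agrad u x))) +
      ∫⁻ x in D.jumpSet u ∩ Ω, ENNReal.ofReal (g (D.normal u x)) ∂(haus n)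
  else ⊤

/-- The comparison surface density scaled minimisation problem defining `g^δ(z, ν)`:
`t^{1-n} inf {∫_{S_u ∩ tQ^ν} (χ_P + δ(1+|[u]|)) dH^{n-1} : u ∈ SBV^pc(tQ^ν), u = u^ν_{0,z} near ∂(tQ^ν)}`. -/
def gdeltaApprox (D : FDData n) (δ z : ℝ) (ν : Euc n) (C : Set (Euc n)) (t : ℝ) : ℝ :=
  sInf {r : ℝ | ∃ u : Euc n → ℝ, D.memPC (t • C) u ∧
    (∃ V : Set (Euc n), IsOpen V ∧ frontier (t • C) ⊆ V ∧ ∀ x ∈ V, u x = u01 n ν z x) ∧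
    r = (∫⁻ x in D.jumpSet u ∩ t • C,
          ENNReal.ofReal ((Pset n).indicator (fun _ => (1 : ℝ)) x + δ * (1 + |D.jump u x|))
            ∂(haus n)).toReal / t ^ (n - 1)}

/-- `gd` is the family of comparison surface densities `g^δ(z, ν)`. -/
def IsGdelta (D : FDData n) (gd : ℝ → ℝ → Euc n → ℝ) : Prop :=
  ∀ δ > (0 : ℝ), ∀ z : ℝ, ∀ ν : Euc n, ‖ν‖ = 1 → ∀ C : Set (Euc n), IsDirCube n ν C →
    Tendsto (fun t => gdeltaApprox D δ z ν C t) atTop (𝓝 (gd δ z ν))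



-- ===================== auxiliary development =====================

section Aux

variable {n : ℕ}

/-- `L¹`-type pseudo-distance between two functions over a set. -/
def dd (s : Set (Euc n)) (u v : Euc n → ℝ) : ℝ≥0∞ :=
  ∫⁻ x in s, ENNReal.ofReal |u x - v x|

lemma dd_comm (s : Set (Euc n)) (u v : Euc n → ℝ) : dd s u v = dd s v u := by
  unfold dd
  congr 1
  ext x
  rw [abs_sub_comm]

lemma dd_self (s : Set (Euc n)) (u : Euc n → ℝ) : dd s u u = 0 := by
  unfold dd; simp

lemma dd_mono_set {s t : Set (Euc n)} (h : s ⊆ t) (u v : Euc n → ℝ) :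
    dd s u v ≤ dd t u v :=
  lintegral_mono_set h

lemma aem_absdiff {s : Set (Euc n)} {u w : Euc n → ℝ}
    (hu : AEMeasurable u (volume.restrict s)) (hw : AEMeasurable w (volume.restrict s)) :
    AEMeasurable (fun x => ENNReal.ofReal |u x - w x|) (volume.restrict s) :=
  ENNReal.measurable_ofReal.comp_aemeasurable (continuous_abs.measurable.comp_aemeasurable (hu.sub hw))

lemma dd_tri {s : Set (Euc n)} (u v w : Euc n → ℝ)
    (h : AEMeasurable (fun x => ENNReal.ofReal |u x - w x|) (volume.restrict s)) :
    dd s u v ≤ dd s u w + dd s w v := by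
  calc dd s u v ≤ ∫⁻ x in s, (ENNReal.ofReal |u x - w x| + ENNReal.ofReal |w x - v x|) := by
        apply lintegral_mono fun x => ?_
        rw [← ENNReal.ofReal_add (abs_nonneg _) (abs_nonneg _)]
        exact ENNReal.ofReal_le_ofReal (abs_sub_le _ _ _)
    _ = _ := lintegral_add_left' h _

end Aux

section Main

variable {n : ℕ} (Ω : Set (Euc n)) (εs : ℕ → ℝ)
  (G : ℕ → (Euc n → ℝ) → Set (Euc n) → ℝ≥0∞)

/-- The `perforation' set at step `j`. -/
def aSet (j : ℕ) : Set (Euc n) := Ω ∩ εs j • Pset n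

lemma aSet_subset (j : ℕ) : aSet Ω εs j ⊆ Ω := Set.inter_subset_left

/-- Feasible comparison functions at step `j`, tolerance `δ`, target `u`. -/
def Feas (j : ℕ) (δ : ℝ≥0∞) (u : Euc n → ℝ) : Set (Euc n → ℝ) :=
  {v | IntegrableOn v Ω volume ∧ dd (aSet Ω εs j) u v ≤ δ}

/-- Localised minimal value of the energy near `u`. -/
def mm (j : ℕ) (δ : ℝ≥0∞) (u : Euc n → ℝ) (V : Set (Euc n)) : ℝ≥0∞ :=
  ⨅ v ∈ Feas Ω εs j δ u, G j v V

/-- The `δ → 0` liminf lower envelope. -/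
def LBm (φ : ℕ → ℕ) (u : Euc n → ℝ) (V : Set (Euc n)) : ℝ≥0∞ :=
  ⨆ (δ : ℝ≥0∞) (_ : 0 < δ), liminf (fun k => mm Ω εs G (φ k) δ u V) atTop

/-- The `δ → 0` limsup upper envelope. -/
def UBm (φ : ℕ → ℕ) (u : Euc n → ℝ) (V : Set (Euc n)) : ℝ≥0∞ :=
  ⨆ (δ : ℝ≥0∞) (_ : 0 < δ), limsup (fun k => mm Ω εs G (φ k) δ u V) atTop

variable {Ω εs}

lemma mem_Feas_self {u : Euc n → ℝ} (hu : IntegrableOn u Ω volume) (j : ℕ) (δ : ℝ≥0∞) :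
    u ∈ Feas Ω εs j δ u := by
  refine ⟨hu, ?_⟩
  rw [dd_self]
  exact zero_le

lemma Feas_subset {j : ℕ} {δ δ' : ℝ≥0∞} {u w : Euc n → ℝ}
    (hu : IntegrableOn u Ω volume) (hw : IntegrableOn w Ω volume)
    (h : δ' + dd Ω u w ≤ δ) : Feas Ω εs j δ' w ⊆ Feas Ω εs j δ u := by
  rintro v ⟨hvi, hvc⟩
  refine ⟨hvi, ?_⟩
  have hmeas : AEMeasurable (fun x => ENNReal.ofReal |u x - w x|)
      (volume.restrict (aSet Ω εs j)) := by
    apply aem_absdiff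
    · exact (hu.aestronglyMeasurable.aemeasurable).mono_measure
        (Measure.restrict_mono (aSet_subset Ω εs j) le_rfl)
    · exact (hw.aestronglyMeasurable.aemeasurable).mono_measure
        (Measure.restrict_mono (aSet_subset Ω εs j) le_rfl)
  calc dd (aSet Ω εs j) u v ≤ dd (aSet Ω εs j) u w + dd (aSet Ω εs j) w v :=
        dd_tri u v w hmeas
    _ ≤ dd Ω u w + δ' := add_le_add (dd_mono_set (aSet_subset Ω εs j) u w) hvc
    _ = δ' + dd Ω u w := add_comm _ _
    _ ≤ δ := h

variable {G}

lemma mm_le_mm {j : ℕ} {δ δ' : ℝ≥0∞} {u w : Euc n → ℝ} {V : Set (Euc n)}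
    (hu : IntegrableOn u Ω volume) (hw : IntegrableOn w Ω volume)
    (h : δ' + dd Ω u w ≤ δ) : mm Ω εs G j δ u V ≤ mm Ω εs G j δ' w V := by
  refine le_iInf₂ fun v hv => ?_
  exact iInf₂_le v (Feas_subset hu hw h hv)

lemma mm_anti {j : ℕ} {δ δ' : ℝ≥0∞} {u : Euc n → ℝ} {V : Set (Euc n)}
    (hu : IntegrableOn u Ω volume) (h : δ ≤ δ') : mm Ω εs G j δ' u V ≤ mm Ω εs G j δ u V := by
  apply mm_le_mm hu hu
  rw [dd_self, add_zero]
  exact h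

lemma cost_tendsto_of_convPerf {φ : ℕ → ℕ} {us : ℕ → Euc n → ℝ} {u : Euc n → ℝ}
    (hA : ∀ j, MeasurableSet (aSet Ω εs j))
    (h : ConvPerf Ω (fun k => εs (φ k)) us u) :
    Tendsto (fun k => dd (aSet Ω εs (φ k)) u (us k)) atTop (𝓝 0) := by
  obtain ⟨hus, hu, vs, hvsInt, hvsEq, hvsT⟩ := h
  have key : ∀ k, dd (aSet Ω εs (φ k)) u (us k)
      ≤ ∫⁻ x in Ω, ENNReal.ofReal |vs k x - u x| := by
    intro k
    have h1 : dd (aSet Ω εs (φ k)) u (us k) = dd (aSet Ω εs (φ k)) u (vs k) := by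
      unfold dd
      apply setLIntegral_congr_fun (hA (φ k))
      intro x hx
      dsimp only
      rw [hvsEq k x hx]
    rw [h1]
    calc dd (aSet Ω εs (φ k)) u (vs k) ≤ dd Ω u (vs k) :=
          dd_mono_set (aSet_subset Ω εs (φ k)) _ _
      _ = _ := by rw [dd_comm]; rfl
  exact tendsto_of_tendsto_of_tendsto_of_le_of_le tendsto_const_nhds hvsT
    (fun k => zero_le) key

lemma convPerf_of_cost {φ : ℕ → ℕ} {us : ℕ → Euc n → ℝ} {u : Euc n → ℝ}
    (hA : ∀ j, MeasurableSet (aSet Ω εs j))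
    (hu : IntegrableOn u Ω volume) (husInt : ∀ k, IntegrableOn (us k) Ω volume)
    (δf : ℕ → ℝ≥0∞) (hcost : ∀ k, dd (aSet Ω εs (φ k)) u (us k) ≤ δf k)
    (hδ : Tendsto δf atTop (𝓝 0)) :
    ConvPerf Ω (fun k => εs (φ k)) us u := by
  refine ⟨husInt, hu,
    fun k => fun x => u x + (aSet Ω εs (φ k)).indicator (fun y => us k y - u y) x, ?_, ?_, ?_⟩
  · intro k
    exact hu.add (((husInt k).sub hu).indicator (hA (φ k)))
  · intro k x hx
    have hx' : x ∈ aSet Ω εs (φ k) := hx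
    show u x + (aSet Ω εs (φ k)).indicator (fun y => us k y - u y) x = us k x
    rw [Set.indicator_of_mem hx']
    ring
  · have key : ∀ k, (∫⁻ x in Ω, ENNReal.ofReal
        |(u x + (aSet Ω εs (φ k)).indicator (fun y => us k y - u y) x) - u x|) ≤ δf k := by
      intro k
      have hb : ∀ x, ENNReal.ofReal
          |(u x + (aSet Ω εs (φ k)).indicator (fun y => us k y - u y) x) - u x|
          = (aSet Ω εs (φ k)).indicator (fun x => ENNReal.ofReal |u x - us k x|) x := by
        intro x
        by_cases hx : x ∈ aSet Ω εs (φ k)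
        · rw [Set.indicator_of_mem hx, Set.indicator_of_mem hx]
          congr 1
          rw [abs_sub_comm]
          congr 1
          ring
        · rw [Set.indicator_of_notMem hx, Set.indicator_of_notMem hx]
          simp
      calc (∫⁻ x in Ω, ENNReal.ofReal
            |(u x + (aSet Ω εs (φ k)).indicator (fun y => us k y - u y) x) - u x|)
          = ∫⁻ x in Ω, (aSet Ω εs (φ k)).indicator
              (fun x => ENNReal.ofReal |u x - us k x|) x := by exact lintegral_congr hb
        _ = ∫⁻ x in aSet Ω εs (φ k), ENNReal.ofReal |u x - us k x| ∂(volume.restrict Ω) :=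
            lintegral_indicator (hA (φ k)) _
        _ = dd (aSet Ω εs (φ k)) u (us k) := by
            rw [Measure.restrict_restrict (hA (φ k)),
              Set.inter_eq_left.mpr (aSet_subset Ω εs (φ k))]
            rfl
        _ ≤ δf k := hcost k
    exact tendsto_of_tendsto_of_tendsto_of_le_of_le tendsto_const_nhds hδ
      (fun k => zero_le) key

lemma LBm_le_GammaLB (φ : ℕ → ℕ) {u : Euc n → ℝ}
    (hA : ∀ j, MeasurableSet (aSet Ω εs j)) (V : Set (Euc n)) :
    LBm Ω εs G φ u V
      ≤ GammaLB Ω (fun k => εs (φ k)) (fun k v W => G (φ k) v W) u V := by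
  refine le_iInf₂ fun us hconv => ?_
  refine iSup₂_le fun δ hδ => ?_
  have hc := cost_tendsto_of_convPerf hA hconv
  have hev : ∀ᶠ k in atTop, dd (aSet Ω εs (φ k)) u (us k) < δ :=
    hc.eventually_lt_const hδ
  refine liminf_le_liminf ?_
  filter_upwards [hev] with k hk
  exact iInf₂_le (us k) ⟨hconv.1 k, hk.le⟩

set_option maxHeartbeats 2000000 in
lemma GammaUB_le_UBm (φ : ℕ → ℕ) {u : Euc n → ℝ}
    (hA : ∀ j, MeasurableSet (aSet Ω εs j))
    (hu : IntegrableOn u Ω volume) (V : Set (Euc n)) :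
    GammaUB Ω (fun k => εs (φ k)) (fun k v W => G (φ k) v W) u V ≤ UBm Ω εs G φ u V := by
  by_cases hS : UBm Ω εs G φ u V = ⊤
  · rw [hS]; exact le_top
  have hlimsup : ∀ (i : ℕ),
      limsup (fun k => mm Ω εs G (φ k) ((↑(i+1) : ℝ≥0∞))⁻¹ u V) atTop ≤ UBm Ω εs G φ u V := by
    intro i
    refine le_iSup₂_of_le ((↑(i+1) : ℝ≥0∞))⁻¹ ?_ le_rfl
    rw [ENNReal.inv_pos]
    exact ENNReal.natCast_ne_top _
  set S := UBm Ω εs G φ u V with hSdef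
  apply ENNReal.le_of_forall_pos_le_add
  intro ε hε _
  set ε1 : ℝ≥0∞ := ((ε / 2 : ℝ≥0) : ℝ≥0∞) with hε1def
  have hε1 : ε1 ≠ 0 := by
    simp only [hε1def, ne_eq, ENNReal.coe_eq_zero]
    exact (half_pos hε).ne'
  have hSε1 : S < S + ε1 := ENNReal.lt_add_right hS hε1
  have hev : ∀ i : ℕ, ∀ᶠ k in atTop,
      mm Ω εs G (φ k) ((↑(i+1) : ℝ≥0∞))⁻¹ u V < S + ε1 := fun i =>
    eventually_lt_of_limsup_lt ((hlimsup i).trans_lt hSε1)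
  choose N hN using fun i => eventually_atTop.mp (hev i)
  let K : ℕ → ℕ := fun i => Nat.rec (N 0) (fun i ih => max (N (i + 1)) (ih + 1)) i
  have hKsucc : ∀ i, K (i+1) = max (N (i+1)) (K i + 1) := fun i => rfl
  have hKN : ∀ i, N i ≤ K i := by
    intro i
    cases i with
    | zero => exact le_rfl
    | succ i => rw [hKsucc]; exact le_max_left _ _
  have hpk : ∀ i k, K i ≤ k → mm Ω εs G (φ k) ((↑(i+1) : ℝ≥0∞))⁻¹ u V < S + ε1 :=
    fun i k hik => hN i k ((hKN i).trans hik)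
  set iG : ℕ → ℕ := fun k => @Nat.findGreatest (fun i => K i ≤ k) (fun i => Nat.decLe _ _) k with hiGdef
  set δf : ℕ → ℝ≥0∞ := fun k => ((↑(iG k + 1) : ℝ≥0∞))⁻¹ with hδfdef
  have hδf0 : Tendsto δf atTop (𝓝 0) := by
    have h0 : Tendsto iG atTop atTop := by
      rw [tendsto_atTop]
      intro b
      filter_upwards [eventually_ge_atTop (max (K b) b)] with k hk
      exact @Nat.le_findGreatest b (fun i => K i ≤ k) (fun i => Nat.decLe _ _) k (le_trans (le_max_right _ _) hk) (le_trans (le_max_left _ _) hk)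
    have h1 : Tendsto (fun k => iG k + 1) atTop atTop :=
      tendsto_atTop_mono (fun k => Nat.le_succ (iG k)) h0
    exact ENNReal.tendsto_inv_nat_nhds_zero.comp h1
  have hbound : ∀ k, K 0 ≤ k → mm Ω εs G (φ k) (δf k) u V < S + ε1 := by
    intro k hk
    have h1 : K (iG k) ≤ k := @Nat.findGreatest_spec 0 (fun i => K i ≤ k) (fun i => Nat.decLe _ _) k (Nat.zero_le k) hk
    exact hpk (iG k) k h1
  have hpick : ∀ k, ∃ v, v ∈ Feas Ω εs (φ k) (δf k) u ∧
      G (φ k) v V ≤ mm Ω εs G (φ k) (δf k) u V + ε1 := by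
    intro k
    by_cases hk : mm Ω εs G (φ k) (δf k) u V = ⊤
    · exact ⟨u, mem_Feas_self hu _ _, by simp [hk]⟩
    · have hlt : mm Ω εs G (φ k) (δf k) u V < mm Ω εs G (φ k) (δf k) u V + ε1 :=
        ENNReal.lt_add_right hk hε1
      conv at hlt => lhs; rw [mm]
      obtain ⟨v, hv⟩ := iInf_lt_iff.mp hlt
      obtain ⟨hvF, hlt2⟩ := iInf_lt_iff.mp hv
      exact ⟨v, hvF, hlt2.le⟩
  choose us hFeas hGle using hpick
  have hconv : ConvPerf Ω (fun k => εs (φ k)) us u :=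
    convPerf_of_cost hA hu (fun k => (hFeas k).1) δf (fun k => (hFeas k).2) hδf0
  have hev2 : ∀ᶠ k in atTop, G (φ k) (us k) V ≤ (S + ε1) + ε1 := by
    filter_upwards [eventually_ge_atTop (K 0)] with k hk
    exact (hGle k).trans (add_le_add_left (hbound k hk).le _)
  have hlimsup2 : limsup (fun k => G (φ k) (us k) V) atTop ≤ S + ↑ε := by
    have h3 : (S + ε1) + ε1 = S + ↑ε := by
      rw [add_assoc, hε1def, ← ENNReal.coe_add, add_halves]
    exact (limsup_le_of_le (h := hev2)).trans_eq h3
  exact (iInf₂_le us hconv).trans hlimsup2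

end Main

section Game

variable {I : Type} {κ : I → Type}

lemma game_step (S : ∀ i, κ i → ℕ → ℝ≥0∞) (g : ℕ → ℕ) (hg : StrictMono g) (i : I) (m : ℕ) :
    ∃ g' : ℕ → ℕ, StrictMono g' ∧ Set.range g' ⊆ Set.range g ∧ (∀ t, g t ≤ g' t) ∧
      ((⨆ j, limsup (fun k => S i j (g k)) atTop) = 0 ∨
        ∃ j, ∀ t, (if (⨆ j, limsup (fun k => S i j (g k)) atTop) = ⊤ then (m : ℝ≥0∞)
          else (⨆ j, limsup (fun k => S i j (g k)) atTop) - (↑(m+1) : ℝ≥0∞)⁻¹)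
            < S i j (g' t)) := by
  set a := ⨆ j, limsup (fun k => S i j (g k)) atTop with ha
  by_cases h0 : a = 0
  · exact ⟨g, hg, subset_rfl, fun t => le_rfl, Or.inl h0⟩
  set c := if a = ⊤ then (m : ℝ≥0∞) else a - (↑(m+1) : ℝ≥0∞)⁻¹ with hc
  have hca : c < a := by
    rw [hc]
    split_ifs with h
    · rw [h]; exact ENNReal.natCast_lt_top m
    · exact ENNReal.sub_lt_self h h0 (by simp)
  obtain ⟨j, hj⟩ := lt_iSup_iff.mp hca
  have hfreq : ∃ᶠ k in atTop, c < S i j (g k) := frequently_lt_of_lt_limsup (h := hj)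
  obtain ⟨ψ, hψm, hψ⟩ := extraction_of_frequently_atTop hfreq
  refine ⟨g ∘ ψ, hg.comp hψm, ?_, fun t => hg.monotone hψm.le_apply, Or.inr ⟨j, fun t => hψ t⟩⟩
  rintro x ⟨t, rfl⟩
  exact ⟨ψ t, rfl⟩

lemma game [Countable I] [Nonempty I] (S : ∀ i, κ i → ℕ → ℝ≥0∞) :
    ∃ φ : ℕ → ℕ, StrictMono φ ∧ ∀ i,
      (⨆ j, limsup (fun k => S i j (φ k)) atTop)
        ≤ ⨆ j, liminf (fun k => S i j (φ k)) atTop := by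
  obtain ⟨f, hf⟩ := exists_surjective_nat I
  set e : ℕ → I := fun m => f (Nat.unpair m).2 with he
  have he2 : ∀ (i : I) (m₀ : ℕ), ∃ m, m₀ ≤ m ∧ e m = i := by
    intro i m₀
    obtain ⟨a, ha⟩ := hf i
    exact ⟨Nat.pair m₀ a, Nat.left_le_pair _ _, by simp [he, Nat.unpair_pair, ha]⟩
  choose g' hg'm hg'r hg'le hg'p using game_step S
  let Φ : ℕ → {g : ℕ → ℕ // StrictMono g} := fun m =>
    Nat.rec ⟨id, strictMono_id⟩ (fun m ih => ⟨g' ih.1 ih.2 (e m) m, hg'm ih.1 ih.2 (e m) m⟩) m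
  have hΦsucc : ∀ m, (Φ (m+1)).1 = g' (Φ m).1 (Φ m).2 (e m) m := fun m => rfl
  have hrange : ∀ m, Set.range (Φ (m+1)).1 ⊆ Set.range (Φ m).1 := by
    intro m; rw [hΦsucc]; exact hg'r _ _ _ _
  have hrange2 : ∀ m k, m ≤ k → Set.range (Φ k).1 ⊆ Set.range (Φ m).1 := by
    intro m k hmk
    induction k, hmk using Nat.le_induction with
    | base => exact subset_rfl
    | succ k hk ih => exact (hrange k).trans ih
  set φ : ℕ → ℕ := fun k => (Φ k).1 k with hφ
  have hφm : StrictMono φ := by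
    apply strictMono_nat_of_lt_succ
    intro k
    calc φ k = (Φ k).1 k := rfl
      _ < (Φ k).1 (k+1) := (Φ k).2 (Nat.lt_succ_self k)
      _ ≤ (Φ (k+1)).1 (k+1) := by rw [hΦsucc]; exact hg'le _ _ _ _ _
  have hmem : ∀ m k, m ≤ k → φ k ∈ Set.range (Φ m).1 := fun m k hmk =>
    hrange2 m k hmk ⟨k, rfl⟩
  have hmaple : ∀ m, Filter.map φ atTop ≤ Filter.map (Φ m).1 atTop := by
    intro m s hs
    rw [Filter.mem_map, Filter.mem_atTop_sets] at hs ⊢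
    obtain ⟨Nb, hNb⟩ := hs
    refine ⟨max m ((Φ m).1 Nb + 1), fun k hk => ?_⟩
    obtain ⟨t, ht⟩ := hmem m k (le_trans (le_max_left _ _) hk)
    have h2 : (Φ m).1 Nb < (Φ m).1 t := by
      rw [ht]
      calc (Φ m).1 Nb < (Φ m).1 Nb + 1 := Nat.lt_succ_self _
        _ ≤ k := le_trans (le_max_right _ _) hk
        _ ≤ φ k := hφm.le_apply
    have h3 : Nb ≤ t := ((Φ m).2.lt_iff_lt.mp h2).le
    have h4 := hNb t h3
    show φ k ∈ s
    rw [← ht]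
    exact h4
  have hlimsuple : ∀ m (s : ℕ → ℝ≥0∞),
      limsup (fun k => s (φ k)) atTop ≤ limsup (fun k => s ((Φ m).1 k)) atTop := by
    intro m s
    have h1 : limsup (fun k => s (φ k)) atTop = limsup s (Filter.map φ atTop) := rfl
    have h2 : limsup (fun k => s ((Φ m).1 k)) atTop = limsup s (Filter.map (Φ m).1 atTop) := rfl
    rw [h1, h2]
    exact limsup_le_limsup_of_le (hmaple m)
  refine ⟨φ, hφm, ?_⟩
  intro i
  have hAam : ∀ m, (⨆ j, limsup (fun k => S i j (φ k)) atTop)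
      ≤ ⨆ j, limsup (fun k => S i j ((Φ m).1 k)) atTop :=
    fun m => iSup_mono fun j => hlimsuple m (S i j)
  have hstage : ∀ m, e m = i →
      (⨆ j, limsup (fun k => S i j ((Φ m).1 k)) atTop) = 0 ∨
      (if (⨆ j, limsup (fun k => S i j ((Φ m).1 k)) atTop) = ⊤ then (m : ℝ≥0∞)
        else (⨆ j, limsup (fun k => S i j ((Φ m).1 k)) atTop) - (↑(m+1) : ℝ≥0∞)⁻¹)
        ≤ ⨆ j, liminf (fun k => S i j (φ k)) atTop := by
    intro m hm
    rw [← hm]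
    have hp := hg'p (Φ m).1 (Φ m).2 (e m) m
    rcases hp with h | ⟨j, hj⟩
    · exact Or.inl h
    · right
      have hev : ∀ᶠ k in atTop,
          (if (⨆ j, limsup (fun k => S (e m) j ((Φ m).1 k)) atTop) = ⊤ then (m : ℝ≥0∞)
            else (⨆ j, limsup (fun k => S (e m) j ((Φ m).1 k)) atTop) - (↑(m+1) : ℝ≥0∞)⁻¹)
          ≤ S (e m) j (φ k) := by
        filter_upwards [eventually_ge_atTop (m+1)] with k hk
        obtain ⟨t, ht⟩ := hmem (m+1) k hk
        rw [← ht]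
        exact (hj t).le
      exact le_trans (le_liminf_of_le (by isBoundedDefault) hev)
        (le_iSup (f := fun j => liminf (fun k => S (e m) j (φ k)) atTop) j)
  apply ENNReal.le_of_forall_pos_le_add
  intro ε hε hB
  obtain ⟨Nb, hNb⟩ := ENNReal.exists_nat_gt hB.ne
  obtain ⟨Ne', hNe⟩ : ∃ Ne' : ℕ, (↑(Ne'+1) : ℝ≥0∞)⁻¹ < (ε : ℝ≥0∞) := by
    obtain ⟨nn, hnn⟩ := ENNReal.exists_inv_nat_lt (by exact_mod_cast hε.ne' : (ε : ℝ≥0∞) ≠ 0)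
    refine ⟨nn, lt_of_le_of_lt ?_ hnn⟩
    apply ENNReal.inv_le_inv.mpr
    exact_mod_cast Nat.le_succ nn
  obtain ⟨m, hm1, hm2⟩ := he2 i (max Nb Ne')
  rcases hstage m hm2 with h0 | hge
  · exact le_trans (le_trans (hAam m) h0.le) (zero_le)
  · by_cases htop : (⨆ j, limsup (fun k => S i j ((Φ m).1 k)) atTop) = ⊤
    · rw [if_pos htop] at hge
      exfalso
      have hc1 : (Nb : ℝ≥0∞) ≤ (m : ℝ≥0∞) := by
        exact_mod_cast le_trans (le_max_left _ _) hm1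
      exact absurd (lt_of_lt_of_le hNb (hc1.trans hge)) (lt_irrefl _)
    · rw [if_neg htop] at hge
      have h5 : (⨆ j, limsup (fun k => S i j (φ k)) atTop) - (↑(m+1) : ℝ≥0∞)⁻¹
          ≤ ⨆ j, liminf (fun k => S i j (φ k)) atTop :=
        le_trans (tsub_le_tsub_right (hAam m) _) hge
      have h6 := tsub_le_iff_right.mp h5
      refine h6.trans (add_le_add_right ?_ _)
      refine le_trans ?_ hNe.le
      apply ENNReal.inv_le_inv.mpr
      exact_mod_cast Nat.succ_le_succ (le_trans (le_max_right _ _) hm1)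

end Game

section DenseCover

variable {n : ℕ}

lemma exists_dense_seq (Ω : Set (Euc n)) :
    ∃ dFun : ℕ → (Euc n → ℝ), (∀ i, IntegrableOn (dFun i) Ω volume) ∧
      ∀ u : Euc n → ℝ, IntegrableOn u Ω volume → ∀ ρ : ℝ≥0∞, 0 < ρ →
        ∃ i, dd Ω u (dFun i) < ρ := by
  haveI : Fact ((1 : ℝ≥0∞) ≤ 1) := ⟨le_rfl⟩
  haveI : Fact ((1 : ℝ≥0∞) ≠ ⊤) := ⟨by simp⟩
  obtain ⟨T, hTc, hTd⟩ :=
    TopologicalSpace.exists_countable_dense (Lp ℝ 1 (volume.restrict Ω))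
  have hTne : T.Nonempty := hTd.nonempty
  obtain ⟨f, hfT⟩ := Set.Countable.exists_eq_range hTc hTne
  refine ⟨fun i => ⇑(f i), fun i => L1.integrable_coeFn (f i), ?_⟩
  intro u hu ρ hρ
  have hu1 : Integrable u (volume.restrict Ω) := hu
  obtain ⟨r, hr0, hrρ⟩ : ∃ r : ℝ, 0 < r ∧ ENNReal.ofReal r ≤ ρ := by
    rcases eq_or_ne ρ ⊤ with h | h
    · exact ⟨1, one_pos, by simp [h]⟩
    · exact ⟨ρ.toReal, ENNReal.toReal_pos hρ.ne' h, by rw [ENNReal.ofReal_toReal h]⟩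
  obtain ⟨g, hgT, hgd⟩ := hTd.exists_dist_lt (Integrable.toL1 u hu1) hr0
  rw [hfT] at hgT
  obtain ⟨i, rfl⟩ := hgT
  refine ⟨i, ?_⟩
  have h1 : dd Ω u (⇑(f i)) = eLpNorm (u - ⇑(f i)) 1 (volume.restrict Ω) := by
    rw [eLpNorm_one_eq_lintegral_enorm]
    unfold dd
    apply lintegral_congr
    intro x
    rw [Pi.sub_apply, Real.enorm_eq_ofReal_abs]
  have h2 : eLpNorm (u - ⇑(f i)) 1 (volume.restrict Ω)
      = eLpNorm (⇑(Integrable.toL1 u hu1) - ⇑(f i)) 1 (volume.restrict Ω) :=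
    eLpNorm_congr_ae (EventuallyEq.sub (hu1.coeFn_toL1).symm (EventuallyEq.refl _ _))
  have h3 : eLpNorm (⇑(Integrable.toL1 u hu1) - ⇑(f i)) 1 (volume.restrict Ω)
      = edist (Integrable.toL1 u hu1) (f i) := (Lp.edist_def _ _).symm
  rw [h1, h2, h3, edist_dist]
  calc ENNReal.ofReal (dist (Integrable.toL1 u hu1) (f i)) < ENNReal.ofReal r := by
        rw [ENNReal.ofReal_lt_ofReal_iff hr0]; exact hgd
    _ ≤ ρ := hrρ

/-- finite unions of balls with centres in a countable dense set. -/
def Uof (cen : ℕ → Euc n) (s : Finset (ℕ × ℚ)) : Set (Euc n) :=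
  ⋃ p ∈ s, Metric.ball (cen p.1) (p.2 : ℝ)

lemma exists_Uof (cen : ℕ → Euc n) (hcen : DenseRange cen) {K U : Set (Euc n)}
    (hK : IsCompact K) (hU : IsOpen U) (hKU : K ⊆ U) :
    ∃ s : Finset (ℕ × ℚ), K ⊆ Uof cen s ∧ closure (Uof cen s) ⊆ U := by
  set Cov : ℕ × ℚ → Set (Euc n) := fun p =>
    if Metric.closedBall (cen p.1) (p.2 : ℝ) ⊆ U then Metric.ball (cen p.1) (p.2 : ℝ)
    else ∅ with hCov
  have hopen : ∀ p, IsOpen (Cov p) := by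
    intro p
    rw [hCov]
    dsimp only
    split_ifs
    exacts [Metric.isOpen_ball, isOpen_empty]
  have hcov : K ⊆ ⋃ p, Cov p := by
    intro x hx
    obtain ⟨ε, hε, hball⟩ := Metric.isOpen_iff.mp hU x (hKU hx)
    obtain ⟨q, hq0, hq2⟩ := exists_rat_btwn (half_pos hε)
    have hq0' : (0 : ℝ) < (q : ℝ) := hq0
    obtain ⟨i, hi⟩ := hcen.exists_dist_lt x hq0'
    have hcb : Metric.closedBall (cen i) (q : ℝ) ⊆ U := by
      intro y hy
      apply hball
      rw [Metric.mem_ball]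
      calc dist y x ≤ dist y (cen i) + dist (cen i) x :=
            dist_triangle _ _ _
        _ ≤ (q : ℝ) + (q : ℝ) := by
            refine add_le_add (Metric.mem_closedBall.mp hy) ?_
            rw [dist_comm]
            exact hi.le
        _ < ε := by linarith
    refine Set.mem_iUnion.mpr ⟨(i, q), ?_⟩
    rw [hCov]
    dsimp only
    rw [if_pos hcb]
    exact Metric.mem_ball.mpr hi
  obtain ⟨t, ht⟩ := hK.elim_finite_subcover Cov hopen hcov
  refine ⟨t.filter (fun p => Metric.closedBall (cen p.1) (p.2 : ℝ) ⊆ U), ?_, ?_⟩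
  · intro x hx
    obtain ⟨p, hpt, hpx⟩ := Set.mem_iUnion₂.mp (ht hx)
    have hcb : Metric.closedBall (cen p.1) (p.2 : ℝ) ⊆ U := by
      by_contra h
      rw [hCov] at hpx
      dsimp only at hpx
      rw [if_neg h] at hpx
      exact hpx
    have hx2 : x ∈ Metric.ball (cen p.1) (p.2 : ℝ) := by
      rw [hCov] at hpx
      dsimp only at hpx
      rwa [if_pos hcb] at hpx
    exact Set.mem_iUnion₂.mpr ⟨p, Finset.mem_filter.mpr ⟨hpt, hcb⟩, hx2⟩
  · have hclosed : IsClosed (⋃ p ∈ t.filter (fun p => Metric.closedBall (cen p.1) (p.2 : ℝ) ⊆ U),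
        Metric.closedBall (cen p.1) (p.2 : ℝ)) := by
      apply Set.Finite.isClosed_biUnion (Finset.finite_toSet _)
      exact fun p _ => Metric.isClosed_closedBall
    have hsub : Uof cen (t.filter (fun p => Metric.closedBall (cen p.1) (p.2 : ℝ) ⊆ U))
        ⊆ ⋃ p ∈ t.filter (fun p => Metric.closedBall (cen p.1) (p.2 : ℝ) ⊆ U),
          Metric.closedBall (cen p.1) (p.2 : ℝ) :=
      Set.iUnion₂_mono fun p _ => Metric.ball_subset_closedBall
    refine (closure_minimal hsub hclosed).trans ?_
    apply Set.iUnion₂_subset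
    intro p hp
    exact (Finset.mem_filter.mp hp).2

end DenseCover

lemma isClosed_Pset (n : ℕ) : IsClosed (Pset n) := by
  have h : Pset n = ⋂ (k : Fin n → ℤ), ⋃ (i : Fin n),
      {x : Euc n | (1:ℝ)/4 ≤ |x i - (k i : ℝ)|} := by
    ext x
    simp only [Pset, Set.mem_setOf_eq, Set.mem_iInter, Set.mem_iUnion]
  rw [h]
  refine isClosed_iInter fun k => ?_
  refine isClosed_iUnion_of_finite fun i => ?_
  have hcont : Continuous (fun x : Euc n => |x i - (k i : ℝ)|) :=
    (((continuous_apply i).comp (PiLp.continuous_ofLp ..)).sub continuous_const).abs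
  exact isClosed_le continuous_const hcont

section Three

variable {n : ℕ} (Ω : Set (Euc n)) (εs : ℕ → ℝ)
  (G : ℕ → (Euc n → ℝ) → Set (Euc n) → ℝ≥0∞)
  (cen : ℕ → Euc n) (dFun : ℕ → Euc n → ℝ)

/-- The member type of the diagonalisation game at index `i`. -/
def GK (i : ℕ × ℚ × Finset (ℕ × ℚ)) : Type :=
  {p : ℕ × ℚ × Set (Euc n) // 0 < p.2.1 ∧ IsOpen p.2.2 ∧ IsCompact (closure p.2.2) ∧
    closure p.2.2 ⊆ Uof cen i.2.2 ∧
    ENNReal.ofReal (i.2.1 : ℝ) + dd Ω (dFun i.1) (dFun p.1) < ENNReal.ofReal (p.2.1 : ℝ)}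

/-- The sequences of the diagonalisation game. -/
def GS (i : ℕ × ℚ × Finset (ℕ × ℚ)) (j : GK Ω cen dFun i) : ℕ → ℝ≥0∞ :=
  fun jj => mm Ω εs G jj (ENNReal.ofReal (j.1.2.1 : ℝ)) (dFun j.1.1) j.1.2.2

lemma three (φ : ℕ → ℕ)
    (hgame : ∀ i : ℕ × ℚ × Finset (ℕ × ℚ),
      (⨆ j, limsup (fun k => GS Ω εs G cen dFun i j (φ k)) atTop)
        ≤ ⨆ j, liminf (fun k => GS Ω εs G cen dFun i j (φ k)) atTop)
    (hdInt : ∀ i, IntegrableOn (dFun i) Ω volume)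
    (hdd : ∀ u : Euc n → ℝ, IntegrableOn u Ω volume → ∀ ρ : ℝ≥0∞, 0 < ρ →
        ∃ i, dd Ω u (dFun i) < ρ)
    {u : Euc n → ℝ} (hu : IntegrableOn u Ω volume) (s : Finset (ℕ × ℚ)) :
    (⨆ (V : Set (Euc n)) (_ : IsOpen V ∧ IsCompact (closure V) ∧ closure V ⊆ Uof cen s),
      UBm Ω εs G φ u V)
    ≤ ⨆ (V : Set (Euc n)) (_ : IsOpen V ∧ IsCompact (closure V) ∧ closure V ⊆ Uof cen s),
      LBm Ω εs G φ u V := by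
  refine iSup₂_le fun V hV => ?_
  rw [UBm]
  refine iSup₂_le fun δ hδ => ?_
  obtain ⟨q, hq0, h3q⟩ : ∃ q : ℚ, 0 < q ∧ ENNReal.ofReal (3 * (q:ℝ)) ≤ δ := by
    rcases eq_or_ne δ ⊤ with h | h
    · exact ⟨1, one_pos, by rw [h]; exact le_top⟩
    · have hp : (0:ℝ) < δ.toReal / 3 := by
        have := ENNReal.toReal_pos hδ.ne' h
        linarith
      obtain ⟨q, hq1, hq2⟩ := exists_rat_btwn hp
      refine ⟨q, by exact_mod_cast hq1, ?_⟩
      have h3 : 3 * (q:ℝ) ≤ δ.toReal := by linarith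
      calc ENNReal.ofReal (3*(q:ℝ)) ≤ ENNReal.ofReal δ.toReal := ENNReal.ofReal_le_ofReal h3
        _ = δ := ENNReal.ofReal_toReal h
  have hq0' : (0:ℝ) < (q:ℝ) := by exact_mod_cast hq0
  obtain ⟨iw, hiw⟩ := hdd u hu (ENNReal.ofReal (q:ℝ)) (by rw [ENNReal.ofReal_pos]; exact hq0')
  have hstep1 : ∀ k, mm Ω εs G (φ k) δ u V
      ≤ mm Ω εs G (φ k) (ENNReal.ofReal ((2*q : ℚ) : ℝ)) (dFun iw) V := by
    intro k
    apply mm_le_mm hu (hdInt iw)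
    calc ENNReal.ofReal ((2*q : ℚ) : ℝ) + dd Ω u (dFun iw)
        ≤ ENNReal.ofReal ((2*q:ℚ):ℝ) + ENNReal.ofReal (q:ℝ) := add_le_add_right hiw.le _
      _ = ENNReal.ofReal (3 * (q:ℝ)) := by
          rw [← ENNReal.ofReal_add (by positivity) (by positivity)]
          congr 1
          push_cast
          ring
      _ ≤ δ := h3q
  have hmemc : 0 < ((iw, 2*q, V) : ℕ × ℚ × Set (Euc n)).2.1 ∧
      IsOpen ((iw, 2*q, V) : ℕ × ℚ × Set (Euc n)).2.2 ∧
      IsCompact (closure ((iw, 2*q, V) : ℕ × ℚ × Set (Euc n)).2.2) ∧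
      closure ((iw, 2*q, V) : ℕ × ℚ × Set (Euc n)).2.2 ⊆
        Uof cen ((iw, q, s) : ℕ × ℚ × Finset (ℕ × ℚ)).2.2 ∧
      ENNReal.ofReal (((iw, q, s) : ℕ × ℚ × Finset (ℕ × ℚ)).2.1 : ℝ) +
        dd Ω (dFun ((iw, q, s) : ℕ × ℚ × Finset (ℕ × ℚ)).1)
          (dFun ((iw, 2*q, V) : ℕ × ℚ × Set (Euc n)).1)
        < ENNReal.ofReal (((iw, 2*q, V) : ℕ × ℚ × Set (Euc n)).2.1 : ℝ) := by
    refine ⟨by positivity, hV.1, hV.2.1, hV.2.2, ?_⟩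
    show ENNReal.ofReal ((q:ℚ):ℝ) + dd Ω (dFun iw) (dFun iw) < ENNReal.ofReal ((2*q : ℚ):ℝ)
    rw [dd_self, add_zero, ENNReal.ofReal_lt_ofReal_iff (by positivity)]
    push_cast
    linarith
  have hgame1 : limsup (fun k =>
        mm Ω εs G (φ k) (ENNReal.ofReal ((2*q:ℚ):ℝ)) (dFun iw) V) atTop
      ≤ ⨆ j, liminf (fun k => GS Ω εs G cen dFun (iw,q,s) j (φ k)) atTop := by
    refine le_trans ?_ (hgame (iw, q, s))
    exact le_iSup (f := fun j =>
      limsup (fun k => GS Ω εs G cen dFun (iw,q,s) j (φ k)) atTop) ⟨(iw, 2*q, V), hmemc⟩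
  have hstep3 : (⨆ j, liminf (fun k => GS Ω εs G cen dFun (iw,q,s) j (φ k)) atTop) ≤
      ⨆ (V' : Set (Euc n)) (_ : IsOpen V' ∧ IsCompact (closure V') ∧ closure V' ⊆ Uof cen s),
        LBm Ω εs G φ u V' := by
    refine iSup_le fun j => ?_
    obtain ⟨⟨iw'', q'', V'⟩, hcond⟩ := j
    obtain ⟨hq''0, hV'o, hV'c, hV's, hlt⟩ := hcond
    set δ₀ := ENNReal.ofReal ((q'':ℚ):ℝ)
      - (ENNReal.ofReal ((q:ℚ):ℝ) + dd Ω (dFun iw) (dFun iw'')) with hδ₀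
    have hδ₀pos : 0 < δ₀ := tsub_pos_of_lt hlt
    have hcomp : ∀ jj, mm Ω εs G jj (ENNReal.ofReal ((q'':ℚ):ℝ)) (dFun iw'') V'
        ≤ mm Ω εs G jj δ₀ u V' := by
      intro jj
      apply mm_le_mm (hdInt iw'') hu
      have htri : dd Ω (dFun iw'') u ≤ ENNReal.ofReal ((q:ℚ):ℝ) + dd Ω (dFun iw) (dFun iw'') := by
        rw [dd_comm]
        have h5 : dd Ω u (dFun iw'') ≤ dd Ω u (dFun iw) + dd Ω (dFun iw) (dFun iw'') := by
          apply dd_tri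
          apply aem_absdiff
          · exact hu.aestronglyMeasurable.aemeasurable
          · exact (hdInt iw).aestronglyMeasurable.aemeasurable
        exact h5.trans (add_le_add_left hiw.le _)
      calc δ₀ + dd Ω (dFun iw'') u
          ≤ δ₀ + (ENNReal.ofReal ((q:ℚ):ℝ) + dd Ω (dFun iw) (dFun iw'')) :=
            add_le_add_right htri _
        _ = ENNReal.ofReal ((q'':ℚ):ℝ) := by
            rw [hδ₀]
            exact tsub_add_cancel_of_le hlt.le
    have hliminf : liminf (fun k =>
          mm Ω εs G (φ k) (ENNReal.ofReal ((q'':ℚ):ℝ)) (dFun iw'') V') atTop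
        ≤ LBm Ω εs G φ u V' := by
      refine le_trans (liminf_le_liminf (Eventually.of_forall fun k => hcomp (φ k))) ?_
      rw [LBm]
      exact le_iSup₂_of_le δ₀ hδ₀pos le_rfl
    exact hliminf.trans (le_iSup₂_of_le V' ⟨hV'o, hV'c, hV's⟩ le_rfl)
  exact ((limsup_le_limsup (Eventually.of_forall hstep1)).trans hgame1).trans hstep3

end Three

/-- compactness: coincidence of the inner regular envelopes. -/
theorem statement_3
    (n : ℕ) (hn : 2 ≤ n)
    (Ω : Set (Euc n)) (hΩo : IsOpen Ω) (hΩb : Bornology.IsBounded Ω)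
    (hΩl : IsLipschitzDomain n Ω) (D : FDData n)
    (β : ℝ → ℝ) (hβpos : ∀ ε : ℝ, 0 < ε → 0 < β ε)
    (hβ0 : Tendsto β (𝓝[>] (0 : ℝ)) (𝓝 0))
    (εs : ℕ → ℝ) (hεpos : ∀ k, 0 < εs k) (hεanti : StrictAnti εs)
    (hεlim : Tendsto εs atTop (𝓝 0)) :
    ∃ φ : ℕ → ℕ, StrictMono φ ∧
      ∀ u : Euc n → ℝ, IntegrableOn u Ω volume → ∀ U : Set (Euc n), IsOpen U → U ⊆ Ω →
        innerEnv (GammaLB Ω (fun k => εs (φ k))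
            (fun k v W => FepsLoc D (β (εs (φ k))) (εs (φ k)) v W)) u U
          = innerEnv (GammaUB Ω (fun k => εs (φ k))
            (fun k v W => FepsLoc D (β (εs (φ k))) (εs (φ k)) v W)) u U := by
  set G : ℕ → (Euc n → ℝ) → Set (Euc n) → ℝ≥0∞ :=
    fun j v W => FepsLoc D (β (εs j)) (εs j) v W with hG
  have hA : ∀ j, MeasurableSet (aSet Ω εs j) := by
    intro j
    exact (hΩo.measurableSet).inter
      (((isClosed_Pset n).smul_of_ne_zero (hεpos j).ne').measurableSet)
  obtain ⟨dFun, hdInt, hdd⟩ := exists_dense_seq Ω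
  obtain ⟨DcS, hDcc, hDcd⟩ := TopologicalSpace.exists_countable_dense (Euc n)
  obtain ⟨cen, hcenr⟩ := Set.Countable.exists_eq_range hDcc hDcd.nonempty
  have hcen : DenseRange cen := by
    rw [DenseRange, ← hcenr]
    exact hDcd
  obtain ⟨φ, hφm, hgame⟩ := game (GS Ω εs G cen dFun)
  refine ⟨φ, hφm, ?_⟩
  intro u hu U hUo hUΩ
  apply le_antisymm
  · refine iSup₂_le fun V hV => ?_
    refine le_trans ?_ (le_iSup₂_of_le V hV le_rfl)
    refine le_iInf₂ fun us hconv => ?_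
    exact le_trans (iInf₂_le us hconv) liminf_le_limsup
  · refine iSup₂_le fun V hV => ?_
    obtain ⟨hVo, hVc, hVU⟩ := hV
    obtain ⟨s, hVs, hsU⟩ := exists_Uof cen hcen hVc hUo hVU
    have h1 : GammaUB Ω (fun k => εs (φ k)) (fun k v W => G (φ k) v W) u V
        ≤ UBm Ω εs G φ u V :=
      GammaUB_le_UBm φ hA hu V
    have h2 : UBm Ω εs G φ u V ≤ ⨆ (V'' : Set (Euc n))
        (_ : IsOpen V'' ∧ IsCompact (closure V'') ∧ closure V'' ⊆ Uof cen s),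
          UBm Ω εs G φ u V'' :=
      le_iSup₂_of_le V ⟨hVo, hVc, hVs⟩ le_rfl
    have h3 := three Ω εs G cen dFun φ hgame hdInt hdd hu s
    have h4 : (⨆ (V' : Set (Euc n))
        (_ : IsOpen V' ∧ IsCompact (closure V') ∧ closure V' ⊆ Uof cen s),
          LBm Ω εs G φ u V')
        ≤ innerEnv (GammaLB Ω (fun k => εs (φ k))
            (fun k v W => G (φ k) v W)) u U := by
      refine iSup₂_le fun V' hV' => ?_
      refine le_trans (LBm_le_GammaLB φ hA V') ?_
      exact le_iSup₂_of_le V'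
        ⟨hV'.1, hV'.2.1, (hV'.2.2.trans subset_closure).trans hsU⟩ le_rfl
    exact ((h1.trans h2).trans h3).trans h4
end
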